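/- For all integers m, n ≥ 1 with m + n odd, and any real κ > 0, w > 0: ∫₀^{2π} ∫₀^{2π} H₀⁽¹⁾((κw/2π)|s - t|) sin(ns/2) sin(mt/2) ds dt = 0, where H₀⁽¹⁾ is the Hankel function of the first kind of order zero. -/
import Mathlib


open Real intervalIntegral

/-- Bessel function of the first kind of order zero, via its power series. -/
noncomputable def besselJ0 (x : ℝ) : ℝ :=
  ∑' k : ℕ, (-1 : ℝ) ^ k * (x / 2) ^ (2 * k) / ((Nat.factorial k : ℝ)) ^ 2

/-- Bessel function of the second kind of order zero, via its series expansion. -/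
noncomputable def besselY0 (x : ℝ) : ℝ :=
  (2 / π) * ((Real.log (x / 2) + Real.eulerMascheroniConstant) * besselJ0 x +
    ∑' k : ℕ, (-1 : ℝ) ^ k * (harmonic (k + 1) : ℝ) * (x ^ 2 / 4) ^ (k + 1) /
      ((Nat.factorial (k + 1) : ℝ)) ^ 2)

/-- Hankel function of the first kind of order zero, `H₀⁽¹⁾ = J₀ + i Y₀`. -/
noncomputable def hankelH0 (x : ℝ) : ℂ :=
  (besselJ0 x : ℂ) + Complex.I * (besselY0 x : ℂ)

lemma sin_flip (k : ℕ) (x : ℝ) :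
    Real.sin ((k : ℝ) * (2 * π - x) / 2) = -((-1) ^ k * Real.sin ((k : ℝ) * x / 2)) := by
  have h : (k : ℝ) * (2 * π - x) / 2 = (k : ℝ) * π - (k : ℝ) * x / 2 := by ring
  rw [h, Real.sin_nat_mul_pi_sub]

theorem stmt_8 (m n : ℕ) (hm : 1 ≤ m) (hn : 1 ≤ n) (hodd : Odd (m + n))
    (κ w : ℝ) (hκ : 0 < κ) (hw : 0 < w) :
    ∫ t in (0 : ℝ)..(2 * π), ∫ s in (0 : ℝ)..(2 * π),
        hankelH0 ((κ * w / (2 * π)) * |s - t|) *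
          (Real.sin (n * s / 2) : ℂ) * (Real.sin (m * t / 2) : ℂ) = 0 := by
  set c : ℝ := κ * w / (2 * π) with hc
  set F : ℝ → ℝ → ℂ := fun s t =>
    hankelH0 (c * |s - t|) * (Real.sin (n * s / 2) : ℂ) * (Real.sin (m * t / 2) : ℂ) with hF
  set G : ℝ → ℂ := fun t => ∫ s in (0 : ℝ)..(2 * π), F s t with hG
  -- pointwise: F (2π - s) (2π - t) = - F s t  (using m+n odd)
  have hsign : ((-1 : ℂ) ^ n * (-1 : ℂ) ^ m) = -1 := by
    rw [← pow_add, add_comm, (hodd).neg_one_pow]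
  have hFflip : ∀ s t : ℝ, F (2 * π - s) (2 * π - t) = -F s t := by
    intro s t
    have habs : |(2 * π - s) - (2 * π - t)| = |s - t| := by
      rw [show (2 * π - s) - (2 * π - t) = -(s - t) by ring, abs_neg]
    simp only [hF, habs, sin_flip]
    simp only [Complex.ofReal_neg, Complex.ofReal_mul, Complex.ofReal_pow,
      Complex.ofReal_one, one_pow]
    linear_combination (hankelH0 (c * |s - t|) * (Real.sin ((n : ℝ) * s / 2) : ℂ) *
      (Real.sin ((m : ℝ) * t / 2) : ℂ)) * hsign
  -- G (2π - t) = - G t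
  have hGflip : ∀ t : ℝ, G (2 * π - t) = -G t := by
    intro t
    have h1 : (∫ s in (0 : ℝ)..(2 * π), F (2 * π - s) (2 * π - t))
        = ∫ s in (0 : ℝ)..(2 * π), F s (2 * π - t) := by
      have := intervalIntegral.integral_comp_sub_left (a := (0 : ℝ)) (b := 2 * π)
        (fun s => F s (2 * π - t)) (2 * π)
      simpa using this
    calc G (2 * π - t) = ∫ s in (0 : ℝ)..(2 * π), F s (2 * π - t) := rfl
      _ = ∫ s in (0 : ℝ)..(2 * π), F (2 * π - s) (2 * π - t) := h1.symm
      _ = ∫ s in (0 : ℝ)..(2 * π), -F s t := by simp only [hFflip]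
      _ = -G t := by rw [intervalIntegral.integral_neg]
  have h2 : (∫ t in (0 : ℝ)..(2 * π), G (2 * π - t)) = ∫ t in (0 : ℝ)..(2 * π), G t := by
    have := intervalIntegral.integral_comp_sub_left (a := (0 : ℝ)) (b := 2 * π) G (2 * π)
    simpa using this
  have h3 : (∫ t in (0 : ℝ)..(2 * π), G t) = -(∫ t in (0 : ℝ)..(2 * π), G t) := by
    conv_lhs => rw [← h2]
    simp only [hGflip]
    rw [intervalIntegral.integral_neg]
  have h4 : (∫ t in (0 : ℝ)..(2 * π), G t) = 0 := by
    have := h3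
    linear_combination (1/2 : ℂ) * this
  exact h4
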